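/- Let P and Q be orthogonal projections on a real inner product space of matrices with ‖QP‖ ≤ √(1−δ+εδ) for some 0 < δ < 1, 0 ≤ ε ≤ 1/2. Then for every matrix H, ‖PH − QH‖_F² ≥ (δ(1−ε)/(1+√(1−δ+εδ)))·(‖PH‖_F² + ‖QH‖_F²) ≥ (δ/4)·(‖PH‖_F² + ‖QH‖_F²). -/
import Mathlib


open RealInnerProductSpace

/-- If P and Q are orthogonal projections on a real inner product space with
‖QP‖ ≤ √(1−δ+εδ), then for every H,
‖PH − QH‖² ≥ (δ(1−ε)/(1+√(1−δ+εδ)))·(‖PH‖² + ‖QH‖²) ≥ (δ/4)·(‖PH‖² + ‖QH‖²). -/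
theorem stmt9 {E : Type*} [NormedAddCommGroup E] [InnerProductSpace ℝ E]
    (P Q : E →ₗ[ℝ] E)
    (hPidem : ∀ x, P (P x) = P x) (hQidem : ∀ x, Q (Q x) = Q x)
    (hPsa : ∀ x y, ⟪P x, y⟫ = ⟪x, P y⟫) (hQsa : ∀ x y, ⟪Q x, y⟫ = ⟪x, Q y⟫)
    (δ ε : ℝ) (hδ0 : 0 < δ) (hδ1 : δ < 1) (hε0 : 0 ≤ ε) (hε1 : ε ≤ 1 / 2)
    (hQP : ∀ x, ‖Q (P x)‖ ≤ Real.sqrt (1 - δ + ε * δ) * ‖x‖) :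
    ∀ H : E,
      (δ * (1 - ε) / (1 + Real.sqrt (1 - δ + ε * δ))) * (‖P H‖ ^ 2 + ‖Q H‖ ^ 2)
          ≤ ‖P H - Q H‖ ^ 2 ∧
      (δ / 4) * (‖P H‖ ^ 2 + ‖Q H‖ ^ 2) ≤
        (δ * (1 - ε) / (1 + Real.sqrt (1 - δ + ε * δ))) * (‖P H‖ ^ 2 + ‖Q H‖ ^ 2) := by
  intro H
  set s := Real.sqrt (1 - δ + ε * δ) with hs
  have harg : (0:ℝ) ≤ 1 - δ + ε * δ := by nlinarith
  have hs0 : 0 ≤ s := Real.sqrt_nonneg _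
  have hs2 : s ^ 2 = 1 - δ + ε * δ := Real.sq_sqrt harg
  have hsle : s ≤ 1 - δ / 4 := by
    have h1 : 1 - δ + ε * δ ≤ (1 - δ / 4) ^ 2 := by nlinarith
    calc s ≤ Real.sqrt ((1 - δ / 4) ^ 2) := Real.sqrt_le_sqrt h1
      _ = 1 - δ / 4 := by
          rw [Real.sqrt_sq (by nlinarith)]
  have hden : (0:ℝ) < 1 + s := by linarith
  have hcoef : δ * (1 - ε) / (1 + s) = 1 - s := by
    rw [div_eq_iff (ne_of_gt hden)]
    nlinarith [hs2]
  -- inner product bound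
  have hinner : ⟪P H, Q H⟫ ≤ s * (‖P H‖ * ‖Q H‖) := by
    have h1 : ⟪P H, Q H⟫ = ⟪Q (P H), Q H⟫ := by
      rw [hQsa, hQidem]
    have h2 : ⟪Q (P H), Q H⟫ ≤ ‖Q (P H)‖ * ‖Q H‖ := real_inner_le_norm _ _
    have h3 : ‖Q (P H)‖ ≤ s * ‖P H‖ := by
      have := hQP (P H)
      rwa [hPidem] at this
    have h4 : ‖Q (P H)‖ * ‖Q H‖ ≤ s * ‖P H‖ * ‖Q H‖ :=
      mul_le_mul_of_nonneg_right h3 (norm_nonneg _)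
    rw [h1]; nlinarith
  have hexp : ‖P H - Q H‖ ^ 2 = ‖P H‖ ^ 2 - 2 * ⟪P H, Q H⟫ + ‖Q H‖ ^ 2 := by
    rw [@norm_sub_sq_real]
  constructor
  · rw [hcoef, hexp]
    nlinarith [sq_nonneg (‖P H‖ - ‖Q H‖), hs0]
  · rw [hcoef]
    have hsum : (0:ℝ) ≤ ‖P H‖ ^ 2 + ‖Q H‖ ^ 2 := by positivity
    nlinarith
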